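/- Let x ∈ ℝⁿ and define the n×n symmetric matrix Θ_x by (Θ_x)_{ij} = (x_i + x_j)/(2n) for i ≠ j and (Θ_x)_{ii} = −Σ_{k≠i}(Θ_x)_{ik}. Then for any symmetric norm ‖·‖ on ℝⁿ and any y ∈ ℝⁿ, ‖(Θ_x − n^{−1} 𝟙⊗x) y‖ ≤ ‖ |x|^↓ ⊙ |y|^↓ ‖, where ⊙ denotes coordinatewise product. -/

import Mathlib

open Finset

/-- `dsort x i` is the `i`-th entry of the non-increasing rearrangement of `|x|`. -/
noncomputable def dsort {n : ℕ} (x : Fin n → ℝ) : Fin n → ℝ :=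
  fun i => |x (Tuple.sort (fun j => |x j|) i.rev)|

/-- The matrix `Θ_x`: off-diagonal entries `(x_i + x_j)/(2n)`, diagonal entries
chosen so that all row sums vanish. -/
noncomputable def Theta {n : ℕ} (x : Fin n → ℝ) : Matrix (Fin n) (Fin n) ℝ :=
  Matrix.of fun i j =>
    if i = j then -∑ l ∈ Finset.univ.erase i, (x i + x l) / (2 * n)
    else (x i + x j) / (2 * n)

namespace SymAux

variable {n : ℕ}

variable {n : ℕ}

lemma abel_sum (A B : ℕ → ℝ) :
    ∀ (m : ℕ) (c : ℕ → ℝ), (∀ i j, i ≤ j → j < m → c j ≤ c i) → (∀ i, i < m → 0 ≤ c i) →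
      (∀ k, k ≤ m → ∑ i ∈ range k, A i ≤ ∑ i ∈ range k, B i) →
      ∑ i ∈ range m, A i * c i ≤ ∑ i ∈ range m, B i * c i := by
  intro m
  induction m with
  | zero => intro c _ _ _; simp
  | succ m ih =>
    intro c hmono hpos hAB
    have h1 : ∑ i ∈ range m, A i * (c i - c m) ≤ ∑ i ∈ range m, B i * (c i - c m) := by
      refine ih _ (fun i j hij hj => ?_) (fun i hi => ?_) (fun k hk => hAB k (hk.trans (Nat.le_succ m)))
      · have := hmono i j hij (Nat.lt_succ_of_lt hj); linarith
      · exact sub_nonneg.2 (hmono i m (le_of_lt hi) (Nat.lt_succ_self m))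
    have h2 : ∑ i ∈ range (m+1), A i ≤ ∑ i ∈ range (m+1), B i := hAB _ le_rfl
    have hcm : 0 ≤ c m := hpos m (Nat.lt_succ_self m)
    have e1 : ∀ F : ℕ → ℝ, ∑ i ∈ range (m+1), F i * c i
        = ∑ i ∈ range m, F i * (c i - c m) + (∑ i ∈ range (m+1), F i) * c m := by
      intro F
      rw [Finset.sum_range_succ, Finset.sum_range_succ (f := F), add_mul,
        Finset.sum_mul]
      simp only [mul_sub]
      rw [Finset.sum_sub_distrib]
      ring
    rw [e1 A, e1 B]
    have := mul_le_mul_of_nonneg_right h2 hcm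
    linarith

lemma count_lt {m : ℕ} (hm : m ≤ n) :
    ∑ t : Fin n, (if (t : ℕ) < m then (1 : ℝ) else 0) = m := by
  rw [Finset.sum_boole]
  congr 1
  have : univ.filter (fun t : Fin n => (t : ℕ) < m)
      = (range m).attachFin (fun a ha => lt_of_lt_of_le (mem_range.1 ha) hm) := by
    ext t
    simp [Finset.mem_attachFin]
  rw [this, Finset.card_attachFin, Finset.card_range]

/-- the sorting permutation: `dsort u = |u| ∘ sortPerm u`. -/
noncomputable def sortPerm (u : Fin n → ℝ) : Equiv.Perm (Fin n) :=
  Fin.revPerm.trans (Tuple.sort (fun j => |u j|))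

lemma dsort_apply (u : Fin n → ℝ) (i : Fin n) : dsort u i = |u (sortPerm u i)| := rfl

lemma dsort_nonneg (u : Fin n → ℝ) (i : Fin n) : 0 ≤ dsort u i := abs_nonneg _

lemma dsort_antitone (u : Fin n → ℝ) : Antitone (dsort u) := by
  intro i j hij
  have h := Tuple.monotone_sort (fun j => |u j|) (Fin.rev_le_rev.2 hij)
  simpa [dsort] using h

lemma eq_dsort {u v : Fin n → ℝ} (τ : Equiv.Perm (Fin n)) (h : ∀ i, v i = |u (τ i)|)
    (hv : Antitone v) : v = dsort u := by
  set f : Fin n → ℝ := fun j => |u j| with hf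
  have h1 : Monotone (f ∘ (Fin.revPerm.trans τ)) := by
    intro i j hij
    have : v (Fin.rev i) ≤ v (Fin.rev j) := hv (Fin.rev_le_rev.2 hij)
    simpa [Function.comp, h, f] using this
  have h2 : Monotone (f ∘ Tuple.sort f) := Tuple.monotone_sort f
  have h3 := Tuple.unique_monotone h1 h2
  funext i
  have h4 : v (Fin.rev (Fin.rev i)) = (f ∘ (Fin.revPerm.trans τ)) (Fin.rev i) := by
    simp [Function.comp, h, f]
  rw [Fin.rev_rev] at h4
  rw [h4, h3]
  simp [dsort, f, Function.comp]

lemma dsort_abs (u : Fin n → ℝ) : dsort (fun i => |u i|) = dsort u := by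
  refine eq_dsort (sortPerm (fun i => |u i|)) (fun i => ?_) (dsort_antitone _)
  · rw [dsort_apply]
    simp [abs_abs]

lemma dsort_sum (u : Fin n → ℝ) : ∑ t, dsort u t = ∑ i, |u i| := by
  simp only [dsort_apply]
  exact Equiv.sum_comp (sortPerm u) (fun i => |u i|)

lemma abs_add_abs_le (p q : ℝ) : |p| + |q| ≤ |p + q| ⊔ |p - q| := by
  rcases le_total 0 p with hp | hp <;> rcases le_total 0 q with hq | hq
  · rw [abs_of_nonneg hp, abs_of_nonneg hq]
    exact le_sup_of_le_left (le_abs_self _)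
  · rw [abs_of_nonneg hp, abs_of_nonpos hq]
    exact le_sup_of_le_right (by rw [← sub_eq_add_neg]; exact le_abs_self _)
  · rw [abs_of_nonpos hp, abs_of_nonneg hq]
    refine le_sup_of_le_right ?_
    have : -p + q = -(p - q) := by ring
    rw [this]
    exact neg_le_abs _
  · rw [abs_of_nonpos hp, abs_of_nonpos hq]
    refine le_sup_of_le_left ?_
    have : -p + -q = -(p + q) := by ring
    rw [this]
    exact neg_le_abs _

lemma pair_prod_le {ai aj bi bj : ℝ} (hai : 0 ≤ ai) (haj : 0 ≤ aj) (hbi : 0 ≤ bi)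
    (hbj : 0 ≤ bj) : ai * bi + aj * bj ≤ (ai ⊔ aj) * (bi ⊔ bj) + (ai ⊓ aj) * (bi ⊓ bj) := by
  rcases le_total ai aj with h | h <;> rcases le_total bi bj with h' | h' <;>
    simp only [sup_eq_right.2, sup_eq_left.2, inf_eq_left.2, inf_eq_right.2,
      sup_of_le_right, sup_of_le_left, inf_of_le_right, inf_of_le_left, h, h'] <;>
    nlinarith [mul_nonneg (sub_nonneg.2 h) (sub_nonneg.2 h')]

lemma pair_prod_le' {ai aj bi bj : ℝ} (hai : 0 ≤ ai) (haj : 0 ≤ aj) (hbi : 0 ≤ bi)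
    (hbj : 0 ≤ bj) : ai * bj + aj * bi ≤ (ai ⊔ aj) * (bi ⊔ bj) + (ai ⊓ aj) * (bi ⊓ bj) := by
  rcases le_total ai aj with h | h <;> rcases le_total bi bj with h' | h' <;>
    simp only [sup_of_le_right, sup_of_le_left, inf_of_le_right, inf_of_le_left, h, h'] <;>
    nlinarith [mul_nonneg (sub_nonneg.2 h) (sub_nonneg.2 h')]

lemma binary_initial {u : Fin n → ℝ} (hu : ∀ i, u i = 0 ∨ u i = 1) (t : Fin n) :
    dsort u t = if (t : ℕ) < (univ.filter (fun i => u i = 1)).card then 1 else 0 := by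
  set c := (univ.filter (fun i => u i = 1)).card with hc
  have hcn : c ≤ n := by
    calc c ≤ (univ : Finset (Fin n)).card := Finset.card_filter_le _ _
    _ = n := by simp
  have hval : ∀ s : Fin n, dsort u s = 0 ∨ dsort u s = 1 := by
    intro s
    rw [dsort_apply]
    rcases hu (sortPerm u s) with h | h <;> simp [h]
  have hsum : ∑ s, dsort u s = c := by
    rw [dsort_sum]
    have : ∀ i, |u i| = if u i = 1 then (1:ℝ) else 0 := by
      intro i; rcases hu i with h | h <;> simp [h]
    rw [Finset.sum_congr rfl (fun i _ => this i), Finset.sum_boole]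
  by_cases ht : (t : ℕ) < c
  · rw [if_pos ht]
    rcases hval t with h0 | h1
    · exfalso
      have hle : ∀ s, dsort u s ≤ (if (s : ℕ) < (t : ℕ) then (1:ℝ) else 0) := by
        intro s
        by_cases hs : (s : ℕ) < (t : ℕ)
        · rw [if_pos hs]
          rcases hval s with h | h <;> simp [h]
        · rw [if_neg hs]
          have : dsort u s ≤ dsort u t := dsort_antitone u (by
            have := Nat.le_of_not_lt hs
            exact Fin.le_def.2 this)
          rw [h0] at this
          exact this
      have := Finset.sum_le_sum (fun s (_ : s ∈ univ) => hle s)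
      rw [hsum, count_lt (le_of_lt (lt_of_lt_of_le t.isLt le_rfl))] at this
      have : (c:ℝ) ≤ (t:ℕ) := this
      exact absurd ht (by exact_mod_cast not_lt.2 this)
    · exact h1
  · rw [if_neg ht]
    rcases hval t with h0 | h1
    · exact h0
    · exfalso
      have hge : ∀ s : Fin n, (if (s : ℕ) < (t : ℕ) + 1 then (1:ℝ) else 0) ≤ dsort u s := by
        intro s
        by_cases hs : (s : ℕ) < (t : ℕ) + 1
        · rw [if_pos hs]
          have : dsort u t ≤ dsort u s := dsort_antitone u (Fin.le_def.2 (Nat.lt_succ_iff.1 hs))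
          rw [h1] at this
          exact this
        · rw [if_neg hs]
          exact dsort_nonneg u s
      have := Finset.sum_le_sum (fun s (_ : s ∈ univ) => hge s)
      rw [hsum, count_lt (by exact t.isLt : (t:ℕ) + 1 ≤ n)] at this
      have h2 : ((t:ℕ):ℝ) + 1 ≤ c := by exact_mod_cast this
      have : (t:ℕ) + 1 ≤ c := by exact_mod_cast h2
      omega

/-! ### The combinatorial quantities -/

def LF (S : Finset (Fin n)) (a b : Fin n → ℝ) : ℝ :=
  (∑ i ∈ S, ∑ j ∈ S, ((a i ⊔ a j) * (b i ⊔ b j) + (a i ⊓ a j) * (b i ⊓ b j)))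
    + 2 * ∑ i ∈ S, ∑ j ∈ Sᶜ, (a i ⊔ a j) * (b i ⊔ b j)

noncomputable def RF (S : Finset (Fin n)) (a b : Fin n → ℝ) : ℝ :=
  2 * n * ∑ t : Fin n, (if (t : ℕ) < S.card then dsort a t * dsort b t else 0)

lemma LF_symm (S : Finset (Fin n)) (a b : Fin n → ℝ) : LF S a b = LF S b a := by
  unfold LF
  congr 1
  · exact Finset.sum_congr rfl fun i _ => Finset.sum_congr rfl fun j _ => by ring
  · congr 1
    exact Finset.sum_congr rfl fun i _ => Finset.sum_congr rfl fun j _ => by ring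

lemma RF_symm (S : Finset (Fin n)) (a b : Fin n → ℝ) : RF S a b = RF S b a := by
  unfold RF
  congr 1
  refine Finset.sum_congr rfl fun t _ => ?_
  split <;> ring

lemma LF_zero_left (S : Finset (Fin n)) {a : Fin n → ℝ} (b : Fin n → ℝ)
    (ha : ∀ i, a i = 0) : LF S a b = 0 := by
  unfold LF
  simp [ha]

lemma RF_zero_left (S : Finset (Fin n)) {a : Fin n → ℝ} (b : Fin n → ℝ)
    (ha : ∀ i, a i = 0) : RF S a b = 0 := by
  unfold RF
  have : ∀ t, dsort a t = 0 := fun t => by rw [dsort_apply, ha, abs_zero]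
  simp [this]

/-! ### Layer-cake decomposition -/

noncomputable def lcNext (a : Fin n → ℝ) (s : ℝ) : Fin n → ℝ :=
  fun i => if a i = 0 then 0 else a i - s

noncomputable def lcChi (a : Fin n → ℝ) : Fin n → ℝ :=
  fun i => if a i = 0 then 0 else 1

variable {a : Fin n → ℝ} {s : ℝ}

lemma lc_scalar_sup (hs : 0 < s) {p q : ℝ} (hp : p = 0 ∨ s ≤ p) (hq : q = 0 ∨ s ≤ q) :
    p ⊔ q = ((if p = 0 then (0:ℝ) else p - s) ⊔ (if q = 0 then 0 else q - s))
      + s * ((if p = 0 then (0:ℝ) else 1) ⊔ (if q = 0 then 0 else 1)) := by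
  rcases hp with hp | hp <;> rcases hq with hq | hq
  · simp [hp, hq]
  · have hq' : q ≠ 0 := ne_of_gt (lt_of_lt_of_le hs hq)
    rw [if_pos hp, if_pos hp, if_neg hq', if_neg hq', hp]
    rw [sup_eq_right.2 (by linarith : (0:ℝ) ≤ q), sup_eq_right.2 (by linarith : (0:ℝ) ≤ q - s),
      sup_eq_right.2 (by norm_num : (0:ℝ) ≤ 1)]
    ring
  · have hp' : p ≠ 0 := ne_of_gt (lt_of_lt_of_le hs hp)
    rw [if_neg hp', if_neg hp', if_pos hq, if_pos hq, hq]
    rw [sup_eq_left.2 (by linarith : (0:ℝ) ≤ p), sup_eq_left.2 (by linarith : (0:ℝ) ≤ p - s),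
      sup_eq_left.2 (by norm_num : (0:ℝ) ≤ 1)]
    ring
  · have hp' : p ≠ 0 := ne_of_gt (lt_of_lt_of_le hs hp)
    have hq' : q ≠ 0 := ne_of_gt (lt_of_lt_of_le hs hq)
    rw [if_neg hp', if_neg hp', if_neg hq', if_neg hq']
    rcases le_total p q with h | h
    · rw [sup_eq_right.2 h, sup_eq_right.2 (by linarith : p - s ≤ q - s), sup_idem]
      ring
    · rw [sup_eq_left.2 h, sup_eq_left.2 (by linarith : q - s ≤ p - s), sup_idem]
      ring

lemma lc_scalar_inf (hs : 0 < s) {p q : ℝ} (hp : p = 0 ∨ s ≤ p) (hq : q = 0 ∨ s ≤ q) :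
    p ⊓ q = ((if p = 0 then (0:ℝ) else p - s) ⊓ (if q = 0 then 0 else q - s))
      + s * ((if p = 0 then (0:ℝ) else 1) ⊓ (if q = 0 then 0 else 1)) := by
  rcases hp with hp | hp <;> rcases hq with hq | hq
  · simp [hp, hq]
  · have hq' : q ≠ 0 := ne_of_gt (lt_of_lt_of_le hs hq)
    rw [if_pos hp, if_pos hp, if_neg hq', if_neg hq', hp]
    rw [inf_eq_left.2 (by linarith : (0:ℝ) ≤ q), inf_eq_left.2 (by linarith : (0:ℝ) ≤ q - s),
      inf_eq_left.2 (by norm_num : (0:ℝ) ≤ 1)]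
    ring
  · have hp' : p ≠ 0 := ne_of_gt (lt_of_lt_of_le hs hp)
    rw [if_neg hp', if_neg hp', if_pos hq, if_pos hq, hq]
    rw [inf_eq_right.2 (by linarith : (0:ℝ) ≤ p), inf_eq_right.2 (by linarith : (0:ℝ) ≤ p - s),
      inf_eq_right.2 (by norm_num : (0:ℝ) ≤ 1)]
    ring
  · have hp' : p ≠ 0 := ne_of_gt (lt_of_lt_of_le hs hp)
    have hq' : q ≠ 0 := ne_of_gt (lt_of_lt_of_le hs hq)
    rw [if_neg hp', if_neg hp', if_neg hq', if_neg hq']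
    rcases le_total p q with h | h
    · rw [inf_eq_left.2 h, inf_eq_left.2 (by linarith : p - s ≤ q - s), inf_idem]
      ring
    · rw [inf_eq_right.2 h, inf_eq_right.2 (by linarith : q - s ≤ p - s), inf_idem]
      ring

lemma lcNext_nonneg (hs : 0 < s) (hv : ∀ i, a i = 0 ∨ s ≤ a i) (i : Fin n) :
    0 ≤ lcNext a s i := by
  unfold lcNext
  rcases hv i with h | h
  · simp [h]
  · rw [if_neg (ne_of_gt (lt_of_lt_of_le hs h))]
    linarith

lemma lcChi_binary (a : Fin n → ℝ) (i : Fin n) : lcChi a i = 0 ∨ lcChi a i = 1 := by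
  unfold lcChi
  split <;> simp

lemma dsort_lcNext (hs : 0 < s) (ha : ∀ i, 0 ≤ a i) (hv : ∀ i, a i = 0 ∨ s ≤ a i) :
    dsort (lcNext a s) = fun t => if dsort a t = 0 then 0 else dsort a t - s := by
  have hval : ∀ t, dsort a t = 0 ∨ s ≤ dsort a t := by
    intro t
    rw [dsort_apply, abs_of_nonneg (ha _)]
    exact hv _
  refine (eq_dsort (sortPerm a) (fun t => ?_) ?_).symm
  · rw [dsort_apply, abs_of_nonneg (ha _)]
    rw [abs_of_nonneg (lcNext_nonneg hs hv _)]
    rfl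
  · intro t t' htt'
    dsimp only
    have hle : dsort a t' ≤ dsort a t := dsort_antitone a htt'
    rcases hval t with h | h
    · have h0' : dsort a t' = 0 := le_antisymm (h ▸ hle) (dsort_nonneg a t')
      simp [h, h0']
    · have hne : dsort a t ≠ 0 := ne_of_gt (lt_of_lt_of_le hs h)
      rw [if_neg hne]
      rcases hval t' with h' | h'
      · rw [if_pos h']
        linarith
      · rw [if_neg (ne_of_gt (lt_of_lt_of_le hs h'))]
        linarith

lemma dsort_lcChi (hs : 0 < s) (ha : ∀ i, 0 ≤ a i) (hv : ∀ i, a i = 0 ∨ s ≤ a i) :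
    dsort (lcChi a) = fun t => if dsort a t = 0 then 0 else 1 := by
  have hval : ∀ t, dsort a t = 0 ∨ s ≤ dsort a t := by
    intro t
    rw [dsort_apply, abs_of_nonneg (ha _)]
    exact hv _
  refine (eq_dsort (sortPerm a) (fun t => ?_) ?_).symm
  · rw [dsort_apply, abs_of_nonneg (ha _)]
    unfold lcChi
    split <;> simp
  · intro t t' htt'
    dsimp only
    have hle : dsort a t' ≤ dsort a t := dsort_antitone a htt'
    rcases hval t with h | h
    · have h0' : dsort a t' = 0 := le_antisymm (h ▸ hle) (dsort_nonneg a t')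
      simp [h, h0']
    · have hne : dsort a t ≠ 0 := ne_of_gt (lt_of_lt_of_le hs h)
      rw [if_neg hne]
      split <;> norm_num

lemma LF_split (S : Finset (Fin n)) (b : Fin n → ℝ) (hs : 0 < s)
    (hv : ∀ i, a i = 0 ∨ s ≤ a i) :
    LF S a b = LF S (lcNext a s) b + s * LF S (lcChi a) b := by
  have hsup : ∀ i j, a i ⊔ a j = (lcNext a s i ⊔ lcNext a s j) + s * (lcChi a i ⊔ lcChi a j) :=
    fun i j => lc_scalar_sup hs (hv i) (hv j)
  have hinf : ∀ i j, a i ⊓ a j = (lcNext a s i ⊓ lcNext a s j) + s * (lcChi a i ⊓ lcChi a j) :=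
    fun i j => lc_scalar_inf hs (hv i) (hv j)
  unfold LF
  have e1 : ∀ i ∈ S, ∀ j ∈ S,
      (a i ⊔ a j) * (b i ⊔ b j) + (a i ⊓ a j) * (b i ⊓ b j)
      = ((lcNext a s i ⊔ lcNext a s j) * (b i ⊔ b j) + (lcNext a s i ⊓ lcNext a s j) * (b i ⊓ b j))
        + s * ((lcChi a i ⊔ lcChi a j) * (b i ⊔ b j) + (lcChi a i ⊓ lcChi a j) * (b i ⊓ b j)) := by
    intro i _ j _
    rw [hsup i j, hinf i j]
    ring
  have e2 : ∀ i ∈ S, ∀ j ∈ Sᶜ,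
      (a i ⊔ a j) * (b i ⊔ b j)
      = (lcNext a s i ⊔ lcNext a s j) * (b i ⊔ b j)
        + s * ((lcChi a i ⊔ lcChi a j) * (b i ⊔ b j)) := by
    intro i _ j _
    rw [hsup i j]
    ring
  rw [Finset.sum_congr rfl (fun i hi => Finset.sum_congr rfl (fun j hj => e1 i hi j hj)),
    Finset.sum_congr rfl (fun i hi => Finset.sum_congr rfl (fun j hj => e2 i hi j hj))]
  simp only [Finset.sum_add_distrib, ← Finset.mul_sum]
  ring

lemma RF_split (S : Finset (Fin n)) (b : Fin n → ℝ) (hs : 0 < s) (ha : ∀ i, 0 ≤ a i)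
    (hv : ∀ i, a i = 0 ∨ s ≤ a i) :
    RF S a b = RF S (lcNext a s) b + s * RF S (lcChi a) b := by
  have hval : ∀ t, dsort a t = 0 ∨ s ≤ dsort a t := by
    intro t
    rw [dsort_apply, abs_of_nonneg (ha _)]
    exact hv _
  unfold RF
  rw [dsort_lcNext hs ha hv, dsort_lcChi hs ha hv]
  have e : ∀ t : Fin n,
      (if (t : ℕ) < S.card then dsort a t * dsort b t else 0)
      = (if (t : ℕ) < S.card then (if dsort a t = 0 then 0 else dsort a t - s) * dsort b t else 0)
        + s * (if (t : ℕ) < S.card then (if dsort a t = 0 then (0:ℝ) else 1) * dsort b t else 0) := by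
    intro t
    by_cases htk : (t : ℕ) < S.card
    · rw [if_pos htk, if_pos htk, if_pos htk]
      rcases hval t with h | h
      · simp [h]
      · rw [if_neg (ne_of_gt (lt_of_lt_of_le hs h)), if_neg (ne_of_gt (lt_of_lt_of_le hs h))]
        ring
    · simp [htk]
  rw [Finset.sum_congr rfl (fun t _ => e t)]
  simp only [Finset.sum_add_distrib, ← Finset.mul_sum]
  ring

lemma binary_nonneg {a : Fin n → ℝ} (ha : ∀ i, a i = 0 ∨ a i = 1) (i : Fin n) : 0 ≤ a i := by
  rcases ha i with h | h <;> simp [h]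

lemma binary_le_one {a : Fin n → ℝ} (ha : ∀ i, a i = 0 ∨ a i = 1) (i : Fin n) : a i ≤ 1 := by
  rcases ha i with h | h <;> simp [h]

lemma binary_wsum {a : Fin n → ℝ} (ha : ∀ i, a i = 0 ∨ a i = 1) (T : Finset (Fin n))
    (h : Fin n → ℝ) : ∑ j ∈ T, a j * h j = ∑ j ∈ T.filter (fun j => a j = 1), h j := by
  rw [Finset.sum_filter]
  refine Finset.sum_congr rfl fun j _ => ?_
  rcases ha j with hj | hj <;> simp [hj]

lemma binary_card_sum {a : Fin n → ℝ} (ha : ∀ i, a i = 0 ∨ a i = 1) (T : Finset (Fin n)) :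
    ∑ j ∈ T, a j = ((T.filter (fun j => a j = 1)).card : ℝ) := by
  rw [← Finset.sum_boole]
  refine Finset.sum_congr rfl fun j _ => ?_
  rcases ha j with hj | hj <;> simp [hj]

lemma binbin_case {a b : Fin n → ℝ} (S : Finset (Fin n)) (ha : ∀ i, a i = 0 ∨ a i = 1)
    (hb : ∀ i, b i = 0 ∨ b i = 1) :
    LF S a b ≤ 2 * n * ((univ.filter (fun i => a i = 1)).card : ℝ) := by
  classical
  have ha0 := binary_nonneg ha
  have ha1 := binary_le_one ha
  have hb0 := binary_nonneg hb
  have hb1 := binary_le_one hb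
  set k := S.card with hk
  have hkn : k ≤ n := by simpa using Finset.card_le_univ S
  set SA := S.filter (fun i => a i = 1) with hSA
  set SnA := S.filter (fun i => ¬ a i = 1) with hSnA
  set R : Fin n → ℝ := fun i =>
    (∑ j ∈ S, ((a i ⊔ a j) * (b i ⊔ b j) + (a i ⊓ a j) * (b i ⊓ b j)))
      + 2 * ∑ j ∈ Sᶜ, (a i ⊔ a j) * (b i ⊔ b j) with hR
  set H : Fin n → ℝ := fun x => ∑ i ∈ SnA, (b i ⊔ b x) with hH
  have hLF : LF S a b = ∑ i ∈ S, R i := by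
    unfold LF
    rw [Finset.mul_sum, ← Finset.sum_add_distrib]
  have hsplit : ∑ i ∈ S, R i = ∑ i ∈ SA, R i + ∑ i ∈ SnA, R i :=
    (Finset.sum_filter_add_sum_filter_not S _ R).symm
  -- rows with a i = 0
  have hrow0 : ∑ i ∈ SnA, R i
      = ∑ j ∈ SA, H j + 2 * ∑ j ∈ Sᶜ.filter (fun j => a j = 1), H j := by
    have e : ∀ i ∈ SnA, R i
        = ∑ j ∈ S, a j * (b i ⊔ b j) + 2 * ∑ j ∈ Sᶜ, a j * (b i ⊔ b j) := by
      intro i hi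
      have hai : a i = 0 := by
        rcases ha i with h | h
        · exact h
        · exact absurd h (Finset.mem_filter.1 hi).2
      rw [hR]
      dsimp only
      congr 1
      · refine Finset.sum_congr rfl fun j _ => ?_
        rw [hai, sup_eq_right.2 (ha0 j), inf_eq_left.2 (ha0 j)]
        ring
      · congr 1
        refine Finset.sum_congr rfl fun j _ => ?_
        rw [hai, sup_eq_right.2 (ha0 j)]
    rw [Finset.sum_congr rfl e, Finset.sum_add_distrib]
    congr 1
    · rw [Finset.sum_comm]
      have : ∀ j ∈ S, ∑ i ∈ SnA, a j * (b i ⊔ b j) = a j * H j := by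
        intro j _
        rw [hH, Finset.mul_sum]
      rw [Finset.sum_congr rfl this, binary_wsum ha]
    · rw [← Finset.mul_sum, Finset.sum_comm]
      have : ∀ j ∈ Sᶜ, ∑ i ∈ SnA, a j * (b i ⊔ b j) = a j * H j := by
        intro j _
        rw [hH, Finset.mul_sum]
      rw [Finset.sum_congr rfl this, binary_wsum ha]
  -- rows with a i = 1 : bound R x + H x ≤ 2n
  have hrow1 : ∀ x ∈ SA, R x + H x ≤ 2 * n := by
    intro x hx
    have hax : a x = 1 := (Finset.mem_filter.1 hx).2
    have hcompl : (Sᶜ.card : ℝ) = (n : ℝ) - k := by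
      rw [Finset.card_compl]
      have : Fintype.card (Fin n) = n := Fintype.card_fin n
      rw [this, Nat.cast_sub hkn]
    rcases hb x with hbx | hbx
    · -- b x = 0
      have eR : R x = ∑ j ∈ S, b j + 2 * ∑ j ∈ Sᶜ, b j := by
        rw [hR]
        dsimp only
        congr 1
        · refine Finset.sum_congr rfl fun j _ => ?_
          rw [hax, hbx, sup_eq_left.2 (ha1 j), sup_eq_right.2 (hb0 j),
            inf_eq_right.2 (ha1 j), inf_eq_left.2 (hb0 j)]
          ring
        · congr 1
          refine Finset.sum_congr rfl fun j _ => ?_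
          rw [hax, hbx, sup_eq_left.2 (ha1 j), sup_eq_right.2 (hb0 j)]
          ring
      have eH : H x ≤ ∑ i ∈ S, b i := by
        rw [hH]
        dsimp only
        have : ∀ i ∈ SnA, (b i ⊔ b x) = b i := by
          intro i _
          rw [hbx, sup_eq_left.2 (hb0 i)]
        rw [Finset.sum_congr rfl this]
        exact Finset.sum_le_sum_of_subset_of_nonneg (Finset.filter_subset _ _)
          (fun i _ _ => hb0 i)
      have hsum_univ : ∑ j ∈ S, b j + ∑ j ∈ Sᶜ, b j = ∑ j, b j :=
        Finset.sum_add_sum_compl S b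
      have hbuniv : ∑ j, b j ≤ (n : ℝ) := by
        calc ∑ j, b j ≤ ∑ _j : Fin n, (1:ℝ) := Finset.sum_le_sum fun j _ => hb1 j
        _ = n := by simp
      have hbS : 0 ≤ ∑ j ∈ S, b j := Finset.sum_nonneg fun j _ => hb0 j
      rw [eR]
      linarith
    · -- b x = 1
      have eR : R x = ∑ j ∈ S, (1 + a j * b j) + 2 * ((n : ℝ) - k) := by
      
        rw [hR]
        dsimp only
        congr 1
        · refine Finset.sum_congr rfl fun j _ => ?_
          rw [hax, hbx, sup_eq_left.2 (ha1 j), sup_eq_left.2 (hb1 j),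
            inf_eq_right.2 (ha1 j), inf_eq_right.2 (hb1 j)]
          ring
        · have : ∀ j ∈ Sᶜ, (a x ⊔ a j) * (b x ⊔ b j) = 1 := by
            intro j _
            rw [hax, hbx, sup_eq_left.2 (ha1 j), sup_eq_left.2 (hb1 j), mul_one]
          rw [Finset.sum_congr rfl this, Finset.sum_const, nsmul_eq_mul, mul_one, hcompl]
      have eH : H x = (SnA.card : ℝ) := by
        rw [hH]
        dsimp only
        have : ∀ i ∈ SnA, (b i ⊔ b x) = 1 := by
          intro i _
          rw [hbx, sup_eq_right.2 (hb1 i)]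
        rw [Finset.sum_congr rfl this, Finset.sum_const, nsmul_eq_mul, mul_one]
      have hab : ∑ j ∈ S, (1 + a j * b j) ≤ (k : ℝ) + (SA.card : ℝ) := by
        rw [Finset.sum_add_distrib, Finset.sum_const, nsmul_eq_mul, mul_one]
        have h1 : ∑ j ∈ S, a j * b j ≤ ∑ j ∈ S, a j :=
          Finset.sum_le_sum fun j _ => mul_le_of_le_one_right (ha0 j) (hb1 j)
        rw [binary_card_sum ha S] at h1
        exact add_le_add le_rfl h1
      have hcards : (SA.card : ℝ) + (SnA.card : ℝ) = (k : ℝ) := by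
        rw [← Nat.cast_add]
        norm_cast
        exact Finset.card_filter_add_card_filter_not (p := fun i => a i = 1)
      rw [eR, eH]
      linarith
  -- rows of the second kind bound
  have hrow2 : ∀ x ∈ Sᶜ.filter (fun j => a j = 1), 2 * H x ≤ 2 * n := by
    intro x _
    have : H x ≤ (SnA.card : ℝ) := by
      rw [hH]
      dsimp only
      calc ∑ i ∈ SnA, (b i ⊔ b x) ≤ ∑ _i ∈ SnA, (1:ℝ) :=
            Finset.sum_le_sum fun i _ => sup_le (hb1 i) (hb1 x)
      _ = (SnA.card : ℝ) := by simp
    have hSnAk : (SnA.card : ℝ) ≤ (n : ℝ) := by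
      have h1 : SnA.card ≤ k := by
        apply Finset.card_le_card
        exact Finset.filter_subset _ _
      exact_mod_cast h1.trans hkn
    linarith
  -- assemble
  have hfinal : LF S a b ≤ 2 * n * (SA.card : ℝ)
      + 2 * n * ((Sᶜ.filter (fun j => a j = 1)).card : ℝ) := by
    rw [hLF, hsplit, hrow0]
    have h1 : ∑ i ∈ SA, R i + ∑ j ∈ SA, H j ≤ ∑ _i ∈ SA, (2 * (n:ℝ)) := by
      rw [← Finset.sum_add_distrib]
      exact Finset.sum_le_sum hrow1
    have h2 : 2 * ∑ j ∈ Sᶜ.filter (fun j => a j = 1), H j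
        ≤ ∑ _j ∈ Sᶜ.filter (fun j => a j = 1), (2 * (n:ℝ)) := by
      rw [Finset.mul_sum]
      exact Finset.sum_le_sum hrow2
    have e1 : ∑ _i ∈ SA, (2 * (n:ℝ)) = 2 * n * (SA.card : ℝ) := by
      rw [Finset.sum_const, nsmul_eq_mul]
      ring
    have e2 : ∑ _j ∈ Sᶜ.filter (fun j => a j = 1), (2 * (n:ℝ))
        = 2 * n * ((Sᶜ.filter (fun j => a j = 1)).card : ℝ) := by
      rw [Finset.sum_const, nsmul_eq_mul]
      ring
    rw [e1] at h1
    rw [e2] at h2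
    linarith
  have hcards2 : (SA.card : ℝ) + ((Sᶜ.filter (fun j => a j = 1)).card : ℝ)
      = ((univ.filter (fun i => a i = 1)).card : ℝ) := by
    rw [← Nat.cast_add]
    norm_cast
    have e1 : SA = (univ.filter (fun i => a i = 1)).filter (· ∈ S) := by
      ext i
      simp only [hSA, Finset.mem_filter, Finset.mem_univ, true_and]
      tauto
    have e2 : Sᶜ.filter (fun j => a j = 1) = (univ.filter (fun i => a i = 1)).filter (¬ · ∈ S) := by
      ext i
      simp only [Finset.mem_filter, Finset.mem_univ, true_and, Finset.mem_compl]
      tauto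
    rw [e1, e2]
    exact Finset.card_filter_add_card_filter_not (p := (· ∈ S))
  calc LF S a b ≤ _ := hfinal
  _ = 2 * n * ((SA.card : ℝ) + ((Sᶜ.filter (fun j => a j = 1)).card : ℝ)) := by ring
  _ = _ := by rw [hcards2]

/-- The binary-binary core combinatorial inequality. -/
lemma binbin (S : Finset (Fin n)) {a b : Fin n → ℝ} (ha : ∀ i, a i = 0 ∨ a i = 1)
    (hb : ∀ i, b i = 0 ∨ b i = 1) : LF S a b ≤ RF S a b := by
  classical
  set ca := (univ.filter (fun i => a i = 1)).card with hca
  set cb := (univ.filter (fun i => b i = 1)).card with hcb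
  have hkn : S.card ≤ n := by simpa using Finset.card_le_univ S
  have hRF : RF S a b = 2 * n * ((min S.card (min ca cb) : ℕ) : ℝ) := by
    unfold RF
    have hminn : min S.card (min ca cb) ≤ n := le_trans (min_le_left _ _) hkn
    have e : ∀ t : Fin n, (if (t : ℕ) < S.card then dsort a t * dsort b t else 0)
        = (if (t : ℕ) < min S.card (min ca cb) then (1:ℝ) else 0) := by
      intro t
      rw [binary_initial ha, binary_initial hb]
      have hiff : ((t:ℕ) < min S.card (min ca cb))
          ↔ ((t:ℕ) < S.card ∧ (t:ℕ) < ca ∧ (t:ℕ) < cb) := by omega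
      by_cases h1 : (t:ℕ) < S.card <;> by_cases h2 : (t:ℕ) < ca <;>
        by_cases h3 : (t:ℕ) < cb <;> simp [h1, h2, h3, hiff, ← hca, ← hcb]
    rw [Finset.sum_congr rfl (fun t _ => e t), count_lt hminn]
  rw [hRF]
  by_cases hcase : S.card ≤ ca ∧ S.card ≤ cb
  · -- min is S.card
    have hmin : min S.card (min ca cb) = S.card := by omega
    rw [hmin]
    -- crude bound: every term is at most 2 resp. 1
    have ha0 := binary_nonneg ha
    have ha1 := binary_le_one ha
    have hb0 := binary_nonneg hb
    have hb1 := binary_le_one hb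
    have hterm : ∀ i j : Fin n,
        (a i ⊔ a j) * (b i ⊔ b j) + (a i ⊓ a j) * (b i ⊓ b j) ≤ 2 := by
      intro i j
      have h1 : (a i ⊔ a j) * (b i ⊔ b j) ≤ 1 :=
        mul_le_one₀ (sup_le (ha1 i) (ha1 j)) (le_trans (hb0 i) le_sup_left)
          (sup_le (hb1 i) (hb1 j))
      have h2 : (a i ⊓ a j) * (b i ⊓ b j) ≤ 1 :=
        mul_le_one₀ (le_trans inf_le_left (ha1 i)) (le_inf (hb0 i) (hb0 j))
          (le_trans inf_le_left (hb1 i))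
      linarith
    have hcross : ∀ i j : Fin n, (a i ⊔ a j) * (b i ⊔ b j) ≤ 1 := fun i j =>
      mul_le_one₀ (sup_le (ha1 i) (ha1 j)) (le_trans (hb0 i) le_sup_left)
        (sup_le (hb1 i) (hb1 j))
    have h1 : LF S a b ≤ (S.card : ℝ) * (S.card * 2) + 2 * (S.card * ((Sᶜ.card : ℝ) * 1)) := by
      unfold LF
      have b1 : ∑ i ∈ S, ∑ j ∈ S, ((a i ⊔ a j) * (b i ⊔ b j) + (a i ⊓ a j) * (b i ⊓ b j))
          ≤ ∑ _i ∈ S, ((S.card : ℝ) * 2) := by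
        refine Finset.sum_le_sum fun i _ => ?_
        calc ∑ j ∈ S, ((a i ⊔ a j) * (b i ⊔ b j) + (a i ⊓ a j) * (b i ⊓ b j))
            ≤ ∑ _j ∈ S, (2:ℝ) := Finset.sum_le_sum fun j _ => hterm i j
        _ = (S.card : ℝ) * 2 := by rw [Finset.sum_const, nsmul_eq_mul]
      have b2 : ∑ i ∈ S, ∑ j ∈ Sᶜ, (a i ⊔ a j) * (b i ⊔ b j)
          ≤ ∑ _i ∈ S, ((Sᶜ.card : ℝ) * 1) := by
        refine Finset.sum_le_sum fun i _ => ?_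
        calc ∑ j ∈ Sᶜ, (a i ⊔ a j) * (b i ⊔ b j) ≤ ∑ _j ∈ Sᶜ, (1:ℝ) :=
              Finset.sum_le_sum fun j _ => hcross i j
        _ = (Sᶜ.card : ℝ) * 1 := by rw [Finset.sum_const, nsmul_eq_mul]
      have c1 : ∑ _i ∈ S, ((S.card : ℝ) * 2) = (S.card : ℝ) * (S.card * 2) := by
        rw [Finset.sum_const, nsmul_eq_mul]
      have c2 : ∑ _i ∈ S, ((Sᶜ.card : ℝ) * 1) = (S.card : ℝ) * ((Sᶜ.card : ℝ) * 1) := by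
        rw [Finset.sum_const, nsmul_eq_mul]
      rw [c1] at b1
      rw [c2] at b2
      linarith
    have hcompl : (Sᶜ.card : ℝ) = (n : ℝ) - S.card := by
      rw [Finset.card_compl, Fintype.card_fin, Nat.cast_sub hkn]
    rw [hcompl] at h1
    have hSc : (0:ℝ) ≤ S.card := Nat.cast_nonneg _
    nlinarith [h1]
  · -- min is ca or cb
    rcases le_total ca cb with hab | hab
    · have hmin : min S.card (min ca cb) = ca := by omega
      rw [hmin]
      exact binbin_case S ha hb
    · have hmin : min S.card (min ca cb) = cb := by omega
      rw [hmin]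
      calc LF S a b = LF S b a := LF_symm S a b
      _ ≤ _ := binbin_case S hb ha

/-- number of distinct positive values -/
noncomputable def mu (a : Fin n → ℝ) : ℕ := ((univ.image a).filter (fun v => 0 < v)).card

lemma mu_decomp {a : Fin n → ℝ} (ha : ∀ i, 0 ≤ a i) (hne : ¬ ∀ i, a i = 0) :
    ∃ s : ℝ, 0 < s ∧ (∀ i, a i = 0 ∨ s ≤ a i) ∧ mu (lcNext a s) < mu a := by
  classical
  have hn0 : 0 < n := by
    rcases Nat.eq_zero_or_pos n with h | h
    · exfalso; apply hne; intro i; exact absurd i.isLt (by omega)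
    · exact h
  set P := (univ.image a).filter (fun v => 0 < v) with hP
  have hPne : P.Nonempty := by
    push_neg at hne
    obtain ⟨i, hi⟩ := hne
    refine ⟨a i, ?_⟩
    simp only [hP, Finset.mem_filter, Finset.mem_image]
    exact ⟨⟨i, by simp⟩, lt_of_le_of_ne (ha i) (Ne.symm hi)⟩
  set s := P.min' hPne with hs
  have hsP : s ∈ P := P.min'_mem hPne
  have hspos : 0 < s := (Finset.mem_filter.1 hsP).2
  refine ⟨s, hspos, fun i => ?_, ?_⟩
  · rcases eq_or_ne (a i) 0 with h | h
    · exact Or.inl h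
    · refine Or.inr (P.min'_le _ ?_)
      simp only [hP, Finset.mem_filter, Finset.mem_image]
      exact ⟨⟨i, by simp⟩, lt_of_le_of_ne (ha i) (Ne.symm h)⟩
  · have hsub : (univ.image (lcNext a s)).filter (fun v => 0 < v)
        ⊆ (P.erase s).image (fun v => v - s) := by
      intro v hv
      simp only [Finset.mem_filter, Finset.mem_image] at hv
      obtain ⟨⟨i, _, hi⟩, hvpos⟩ := hv
      have hai : ¬ a i = 0 := by
        intro h0
        rw [← hi] at hvpos
        simp [lcNext, h0] at hvpos
      have hiv : v = a i - s := by rw [← hi]; simp [lcNext, hai]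
      have haiP : a i ∈ P := by
        simp only [hP, Finset.mem_filter, Finset.mem_image]
        exact ⟨⟨i, by simp⟩, lt_of_le_of_ne (ha i) (Ne.symm hai)⟩
      have hais : a i ≠ s := by
        intro h
        rw [hiv, h] at hvpos
        simp at hvpos
      refine Finset.mem_image.2 ⟨a i, Finset.mem_erase.2 ⟨hais, haiP⟩, by rw [hiv]⟩
    calc mu (lcNext a s) ≤ ((P.erase s).image (fun v => v - s)).card :=
          Finset.card_le_card hsub
      _ ≤ (P.erase s).card := Finset.card_image_le
      _ < P.card := by
          have := Finset.card_erase_of_mem hsP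
          have hPpos : 0 < P.card := Finset.card_pos.2 hPne
          omega

lemma layer1 (S : Finset (Fin n)) {b : Fin n → ℝ} (hb : ∀ i, b i = 0 ∨ b i = 1) :
    ∀ (m : ℕ) (a : Fin n → ℝ), mu a ≤ m → (∀ i, 0 ≤ a i) → LF S a b ≤ RF S a b := by
  intro m
  induction m with
  | zero =>
    intro a hmu ha
    by_cases hz : ∀ i, a i = 0
    · rw [LF_zero_left S b hz, RF_zero_left S b hz]
    · obtain ⟨s, hs, hv, hlt⟩ := mu_decomp ha hz
      omega
  | succ m ih =>
    intro a hmu ha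
    by_cases hz : ∀ i, a i = 0
    · rw [LF_zero_left S b hz, RF_zero_left S b hz]
    · obtain ⟨s, hs, hv, hlt⟩ := mu_decomp ha hz
      rw [LF_split S b hs hv, RF_split S b hs ha hv]
      have h1 : LF S (lcNext a s) b ≤ RF S (lcNext a s) b :=
        ih _ (by omega) (lcNext_nonneg hs hv)
      have h2 : LF S (lcChi a) b ≤ RF S (lcChi a) b := binbin S (lcChi_binary a) hb
      nlinarith [hs.le]

lemma LF_le_RF (S : Finset (Fin n)) {a b : Fin n → ℝ} (ha : ∀ i, 0 ≤ a i)
    (hb : ∀ i, 0 ≤ b i) : LF S a b ≤ RF S a b := by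
  suffices h : ∀ (m : ℕ) (b : Fin n → ℝ), mu b ≤ m → (∀ i, 0 ≤ b i) → LF S a b ≤ RF S a b from
    h (mu b) b le_rfl hb
  intro m
  induction m with
  | zero =>
    intro b hmu hb'
    by_cases hz : ∀ i, b i = 0
    · rw [LF_symm, RF_symm, LF_zero_left S a hz, RF_zero_left S a hz]
    · obtain ⟨s, hs, hv, hlt⟩ := mu_decomp hb' hz
      omega
  | succ m ih =>
    intro b hmu hb'
    by_cases hz : ∀ i, b i = 0
    · rw [LF_symm, RF_symm, LF_zero_left S a hz, RF_zero_left S a hz]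
    · obtain ⟨s, hs, hv, hlt⟩ := mu_decomp hb' hz
      rw [LF_symm, RF_symm, LF_split S a hs hv, RF_split S a hs hb' hv]
      have h1 : LF S (lcNext b s) a ≤ RF S (lcNext b s) a := by
        rw [LF_symm, RF_symm]
        exact ih _ (by omega) (lcNext_nonneg hs hv)
      have h2 : LF S (lcChi b) a ≤ RF S (lcChi b) a := by
        rw [LF_symm, RF_symm]
        exact layer1 S (lcChi_binary b) (mu a) a le_rfl ha
      nlinarith [hs.le]

lemma card_filter_lt {m : ℕ} (hm : m ≤ n) :
    (univ.filter (fun t : Fin n => (t : ℕ) < m)).card = m := by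
  have e : univ.filter (fun t : Fin n => (t : ℕ) < m)
      = (range m).attachFin (fun a ha => lt_of_lt_of_le (mem_range.1 ha) hm) := by
    ext t
    simp [Finset.mem_attachFin]
  rw [e, Finset.card_attachFin, Finset.card_range]

lemma sum_fin_prefix (f : Fin n → ℝ) {k : ℕ} (hk : k ≤ n) :
    ∑ t ∈ univ.filter (fun t : Fin n => (t : ℕ) < k), f t
      = ∑ m ∈ range k, (if h : m < n then f ⟨m, h⟩ else 0) := by
  rw [Finset.sum_filter]
  set F : ℕ → ℝ := fun m => if h : m < n then (if m < k then f ⟨m, h⟩ else 0) else 0 with hF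
  have e1 : ∀ t : Fin n, (if (t : ℕ) < k then f t else 0) = F (t : ℕ) := by
    intro t
    rw [hF]
    dsimp only
    rw [dif_pos t.isLt]
  rw [Finset.sum_congr rfl (fun t _ => e1 t), Fin.sum_univ_eq_sum_range F n]
  rw [← Finset.sum_subset (Finset.range_subset_range.2 hk) (fun m _ hm => by
    have : ¬ m < k := fun h => hm (mem_range.2 h)
    simp [hF, this])]
  refine Finset.sum_congr rfl fun m hm => ?_
  have hmk : m < k := mem_range.1 hm
  rw [hF]
  dsimp only
  by_cases h : m < n
  · rw [dif_pos h, dif_pos h, if_pos hmk]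
  · rw [dif_neg h, dif_neg h]

lemma w_formula (x y : Fin n → ℝ) (hn : (n:ℝ) ≠ 0) (i : Fin n) :
    (Theta x - Matrix.of fun _ j => x j / n).mulVec y i
      = (∑ j, (x i * y j - x j * y i - x i * y i - x j * y j)) / (2 * n) := by
  have split : ∀ f : Fin n → ℝ, ∑ j, f j = f i + ∑ j ∈ univ.erase i, f j :=
    fun f => (Finset.add_sum_erase univ f (Finset.mem_univ i)).symm
  have e0 : (Theta x - Matrix.of fun _ j => x j / n).mulVec y i
      = ∑ j, (Theta x i j - x j / n) * y j := by
    simp [Matrix.mulVec, dotProduct, Matrix.sub_apply]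
  rw [e0]
  have e1 : ∀ j, (Theta x i j - x j / n) * y j = Theta x i j * y j - x j * y j / n := by
    intro j; ring
  rw [Finset.sum_congr rfl (fun j _ => e1 j), Finset.sum_sub_distrib]
  have e2 : ∑ j, Theta x i j * y j = ∑ j, (x i + x j) * (y j - y i) / (2*n) := by
    rw [split (fun j => Theta x i j * y j), split (fun j => (x i + x j) * (y j - y i) / (2*n))]
    have hTii : Theta x i i = -∑ l ∈ univ.erase i, (x i + x l) / (2*n) := by
      simp [Theta]
    have hTij : ∀ j ∈ univ.erase i, Theta x i j * y j = (x i + x j)/(2*n) * y j := by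
      intro j hj
      have hij : ¬ i = j := fun h => (Finset.mem_erase.1 hj).1 h.symm
      simp [Theta, hij]
    rw [hTii, Finset.sum_congr rfl hTij]
    have h0 : (x i + x i) * (y i - y i) / (2*n) = 0 := by ring
    rw [h0, zero_add]
    rw [neg_mul, Finset.sum_mul, neg_add_eq_sub, ← Finset.sum_sub_distrib]
    refine Finset.sum_congr rfl fun j _ => ?_
    ring
  rw [e2, ← Finset.sum_sub_distrib, Finset.sum_div]
  refine Finset.sum_congr rfl fun j _ => ?_
  field_simp
  ring

lemma wm_subset (x y : Fin n → ℝ) (hn : (0:ℝ) < n) (S : Finset (Fin n)) :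
    ∑ i ∈ S, |(Theta x - Matrix.of fun _ j => x j / n).mulVec y i|
      ≤ ∑ t : Fin n, (if (t : ℕ) < S.card then dsort x t * dsort y t else 0) := by
  classical
  set a : Fin n → ℝ := fun i => |x i| with hax
  set b : Fin n → ℝ := fun i => |y i| with hby
  have ha0 : ∀ i, 0 ≤ a i := fun i => abs_nonneg _
  have hb0 : ∀ i, 0 ≤ b i := fun i => abs_nonneg _
  set Bm : Fin n → Fin n → ℝ :=
    fun i j => x i * y j - x j * y i - x i * y i - x j * y j with hBm
  have hn' : (n:ℝ) ≠ 0 := ne_of_gt hn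
  have h2n : (0:ℝ) < 2 * n := by linarith
  -- pointwise estimates
  have pw1 : ∀ i j : Fin n, |Bm i j| + |Bm j i|
      ≤ 2 * ((a i ⊔ a j) * (b i ⊔ b j) + (a i ⊓ a j) * (b i ⊓ b j)) := by
    intro i j
    set u := x i * y j - x j * y i with hu
    set v := x i * y i + x j * y j with hv
    set M := (a i ⊔ a j) * (b i ⊔ b j) + (a i ⊓ a j) * (b i ⊓ b j) with hM
    have hbij : Bm i j = u - v := by rw [hBm, hu, hv]; ring
    have hbji : Bm j i = -(u + v) := by rw [hBm, hu, hv]; ring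
    have hM1 : |u| ≤ M := by
      have h1 : |u| ≤ |x i * y j| + |x j * y i| := abs_sub _ _
      have h2 : |x i * y j| + |x j * y i| = a i * b j + a j * b i := by
        rw [abs_mul, abs_mul]
      rw [h2] at h1
      exact h1.trans (pair_prod_le' (ha0 i) (ha0 j) (hb0 i) (hb0 j))
    have hM2 : |v| ≤ M := by
      have h1 : |v| ≤ |x i * y i| + |x j * y j| := abs_add_le _ _
      have h2 : |x i * y i| + |x j * y j| = a i * b i + a j * b j := by
        rw [abs_mul, abs_mul]
      rw [h2] at h1
      exact h1.trans (pair_prod_le (ha0 i) (ha0 j) (hb0 i) (hb0 j))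
    have key : |u - v| + |u + v| ≤ 2 * M := by
      have h1 := abs_add_abs_le (u - v) (u + v)
      have e1 : (u - v) + (u + v) = 2 * u := by ring
      have e2 : (u - v) - (u + v) = -(2 * v) := by ring
      rw [e1, e2, abs_neg, abs_mul, abs_mul, abs_two] at h1
      refine h1.trans (sup_le (by linarith) (by linarith))
    rw [hbij, hbji, abs_neg]
    exact key
  have pw2 : ∀ i j : Fin n, |Bm i j| ≤ 2 * ((a i ⊔ a j) * (b i ⊔ b j)) := by
    intro i j
    have hB : Bm i j = x i * (y j - y i) - x j * (y i + y j) := by rw [hBm]; ring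
    have h1 : |Bm i j| ≤ a i * |y j - y i| + a j * |y i + y j| := by
      rw [hB]
      refine (abs_sub _ _).trans ?_
      rw [abs_mul, abs_mul]
    have h2 : a i * |y j - y i| + a j * |y i + y j|
        ≤ (a i ⊔ a j) * (|y j - y i| + |y i + y j|) := by
      rw [mul_add]
      exact add_le_add (mul_le_mul_of_nonneg_right le_sup_left (abs_nonneg _))
        (mul_le_mul_of_nonneg_right le_sup_right (abs_nonneg _))
    have h3 : |y j - y i| + |y i + y j| ≤ 2 * (b i ⊔ b j) := by
      have h4 := abs_add_abs_le (y j - y i) (y i + y j)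
      have e1 : (y j - y i) + (y i + y j) = 2 * y j := by ring
      have e2 : (y j - y i) - (y i + y j) = -(2 * y i) := by ring
      rw [e1, e2, abs_neg, abs_mul, abs_mul, abs_two] at h4
      refine h4.trans (sup_le ?_ ?_)
      · have : |y j| ≤ b i ⊔ b j := le_sup_right
        linarith
      · have : |y i| ≤ b i ⊔ b j := le_sup_left
        linarith
    calc |Bm i j| ≤ (a i ⊔ a j) * (|y j - y i| + |y i + y j|) := h1.trans h2
    _ ≤ (a i ⊔ a j) * (2 * (b i ⊔ b j)) := by
        refine mul_le_mul_of_nonneg_left h3 ?_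
        exact le_trans (ha0 i) le_sup_left
    _ = 2 * ((a i ⊔ a j) * (b i ⊔ b j)) := by ring
  -- row sums
  have hBsum : ∑ i ∈ S, |∑ j, Bm i j| ≤ LF S a b := by
    have step1 : ∑ i ∈ S, |∑ j, Bm i j| ≤ ∑ i ∈ S, ∑ j, |Bm i j| :=
      Finset.sum_le_sum fun i _ => Finset.abs_sum_le_sum_abs _ _
    have step2 : ∑ i ∈ S, ∑ j, |Bm i j|
        = ∑ i ∈ S, ∑ j ∈ S, |Bm i j| + ∑ i ∈ S, ∑ j ∈ Sᶜ, |Bm i j| := by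
      rw [← Finset.sum_add_distrib]
      refine Finset.sum_congr rfl fun i _ => ?_
      exact (Finset.sum_add_sum_compl S _).symm
    have step3 : ∑ i ∈ S, ∑ j ∈ S, |Bm i j|
        ≤ ∑ i ∈ S, ∑ j ∈ S, ((a i ⊔ a j) * (b i ⊔ b j) + (a i ⊓ a j) * (b i ⊓ b j)) := by
      have hsym : ∑ i ∈ S, ∑ j ∈ S, |Bm i j| = ∑ i ∈ S, ∑ j ∈ S, |Bm j i| :=
        Finset.sum_comm
      have half : ∑ i ∈ S, ∑ j ∈ S, |Bm i j|
          = (∑ i ∈ S, ∑ j ∈ S, (|Bm i j| + |Bm j i|)) / 2 := by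
        simp only [Finset.sum_add_distrib]
        rw [← hsym]
        ring
      rw [half]
      rw [div_le_iff₀ (by norm_num : (0:ℝ) < 2)]
      rw [Finset.sum_mul]
      refine Finset.sum_le_sum fun i _ => ?_
      rw [Finset.sum_mul]
      refine Finset.sum_le_sum fun j _ => ?_
      have := pw1 i j
      linarith
    have step4 : ∑ i ∈ S, ∑ j ∈ Sᶜ, |Bm i j|
        ≤ ∑ i ∈ S, ∑ j ∈ Sᶜ, 2 * ((a i ⊔ a j) * (b i ⊔ b j)) :=
      Finset.sum_le_sum fun i _ => Finset.sum_le_sum fun j _ => pw2 i j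
    unfold LF
    have e4 : ∑ i ∈ S, ∑ j ∈ Sᶜ, 2 * ((a i ⊔ a j) * (b i ⊔ b j))
        = 2 * ∑ i ∈ S, ∑ j ∈ Sᶜ, (a i ⊔ a j) * (b i ⊔ b j) := by
      simp only [Finset.mul_sum]
    rw [e4] at step4
    linarith
  have hRF : LF S a b ≤ RF S a b := LF_le_RF S ha0 hb0
  have hRFval : RF S a b
      = 2 * n * ∑ t : Fin n, (if (t : ℕ) < S.card then dsort x t * dsort y t else 0) := by
    unfold RF
    rw [hax, hby, dsort_abs, dsort_abs]
  -- put together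
  have hw : ∀ i, |(Theta x - Matrix.of fun _ j => x j / n).mulVec y i|
      = |∑ j, Bm i j| / (2 * n) := by
    intro i
    rw [w_formula x y hn' i, abs_div, abs_of_pos h2n]
  rw [Finset.sum_congr rfl (fun i _ => hw i), ← Finset.sum_div]
  rw [div_le_iff₀ h2n]
  calc ∑ i ∈ S, |∑ j, Bm i j| ≤ RF S a b := hBsum.trans hRF
  _ = _ := by rw [hRFval]; ring

lemma key_chain (w d z : Fin n → ℝ)
    (hWM : ∀ k, k ≤ n → ∑ m ∈ range k, (if h : m < n then dsort w ⟨m, h⟩ else 0)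
        ≤ ∑ m ∈ range k, (if h : m < n then d ⟨m, h⟩ else 0)) :
    ∑ i, z i * w i ≤ ∑ i, |z i| * d ((sortPerm z).symm i) := by
  classical
  have s1 : ∑ i, z i * w i ≤ ∑ i, |z i| * |w i| :=
    Finset.sum_le_sum fun i _ => by
      calc z i * w i ≤ |z i * w i| := le_abs_self _
      _ = |z i| * |w i| := abs_mul _ _
  have s2 : ∑ i, |z i| * |w i|
      = ∑ t, dsort z t * dsort w (((sortPerm z).trans (sortPerm w).symm) t) := by
    rw [← Equiv.sum_comp (sortPerm z) (fun i => |z i| * |w i|)]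
    refine Finset.sum_congr rfl fun t _ => ?_
    rw [dsort_apply z, dsort_apply w]
    congr 2
    rw [Equiv.trans_apply, Equiv.apply_symm_apply]
  have s4 : ∑ t, dsort z t * dsort w (((sortPerm z).trans (sortPerm w).symm) t)
      ≤ ∑ t, dsort z t * dsort w t :=
    Monovary.sum_mul_comp_perm_le_sum_mul ((dsort_antitone z).monovary (dsort_antitone w))
  have convert_sum : ∀ g : Fin n → ℝ, ∑ t, g t
      = ∑ m ∈ range n, (if h : m < n then g ⟨m, h⟩ else 0) := by
    intro g
    rw [← sum_fin_prefix g le_rfl]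
    refine (Finset.sum_congr ?_ (fun t _ => rfl))
    rw [Finset.filter_true_of_mem (fun t _ => t.isLt)]
  have s5 : ∑ t, dsort z t * dsort w t ≤ ∑ t, dsort z t * d t := by
    rw [convert_sum (fun t => dsort z t * dsort w t), convert_sum (fun t => dsort z t * d t)]
    have eA : ∀ m ∈ range n, (if h : m < n then dsort z ⟨m, h⟩ * dsort w ⟨m, h⟩ else 0)
        = (if h : m < n then dsort w ⟨m, h⟩ else 0) * (if h : m < n then dsort z ⟨m, h⟩ else 0) := by
      intro m hm
      have h : m < n := mem_range.1 hm
      rw [dif_pos h, dif_pos h, dif_pos h]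
      ring
    have eB : ∀ m ∈ range n, (if h : m < n then dsort z ⟨m, h⟩ * d ⟨m, h⟩ else 0)
        = (if h : m < n then d ⟨m, h⟩ else 0) * (if h : m < n then dsort z ⟨m, h⟩ else 0) := by
      intro m hm
      have h : m < n := mem_range.1 hm
      rw [dif_pos h, dif_pos h, dif_pos h]
      ring
    rw [Finset.sum_congr rfl eA, Finset.sum_congr rfl eB]
    refine abel_sum _ _ n _ ?_ ?_ hWM
    · intro i j hij hj
      rw [dif_pos hj, dif_pos (lt_of_le_of_lt hij hj)]
      exact dsort_antitone z (by exact Fin.mk_le_mk.2 hij)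
    · intro i hi
      rw [dif_pos hi]
      exact dsort_nonneg z _
  have s6 : ∑ t, dsort z t * d t = ∑ i, |z i| * d ((sortPerm z).symm i) := by
    refine Fintype.sum_equiv (sortPerm z) _ _ fun t => ?_
    rw [dsort_apply z]
    congr 2
    rw [Equiv.symm_apply_apply]
  linarith

end SymAux

open SymAux

/-- Lemma 3: for any symmetric norm `N` on `ℝⁿ`,
`‖(Θ_x − n⁻¹ 𝟙⊗x) y‖ ≤ ‖ |x|^↓ ⊙ |y|^↓ ‖`. -/
theorem symmetric_norm_theta_bound {n : ℕ} (N : (Fin n → ℝ) → ℝ)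
    (hN_add : ∀ a b, N (a + b) ≤ N a + N b)
    (hN_smul : ∀ (c : ℝ) a, N (c • a) = |c| * N a)
    (hN_def : ∀ a, N a = 0 → a = 0)
    (hN_perm : ∀ (σ : Equiv.Perm (Fin n)) a, N (a ∘ σ) = N a)
    (hN_sign : ∀ (ε a : Fin n → ℝ), (∀ i, ε i = 1 ∨ ε i = -1) →
      N (fun i => ε i * a i) = N a)
    (x y : Fin n → ℝ) :
    N ((Theta x - Matrix.of fun _ j => x j / n).mulVec y) ≤
      N (fun i => dsort x i * dsort y i) := by
  classical
  rcases Nat.eq_zero_or_pos n with hn0 | hnpos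
  · subst hn0
    have e : ((Theta x - Matrix.of fun _ j => x j / (0:ℕ)).mulVec y)
        = (fun i => dsort x i * dsort y i) := by
      funext i
      exact i.elim0
    rw [e]
  · have hnR : (0:ℝ) < n := by exact_mod_cast hnpos
    set w : Fin n → ℝ := (Theta x - Matrix.of fun _ j => x j / n).mulVec y with hwdef
    set d : Fin n → ℝ := fun i => dsort x i * dsort y i with hddef
    -- weak majorization
    have hWM : ∀ k, k ≤ n → ∑ m ∈ range k, (if h : m < n then dsort w ⟨m, h⟩ else 0)
        ≤ ∑ m ∈ range k, (if h : m < n then d ⟨m, h⟩ else 0) := by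
      intro k hk
      set T0 := univ.filter (fun t : Fin n => (t : ℕ) < k) with hT0
      set S := T0.image (sortPerm w) with hS
      have hcard : S.card = k := by
        rw [hS, Finset.card_image_of_injective _ (Equiv.injective _), hT0, card_filter_lt hk]
      have lhs_eq : ∑ m ∈ range k, (if h : m < n then dsort w ⟨m, h⟩ else 0)
          = ∑ i ∈ S, |w i| := by
        rw [← sum_fin_prefix (dsort w) hk, hS, Finset.sum_image
          (fun t _ t' _ h => Equiv.injective _ h)]
        rfl
      have rhs_eq : ∑ m ∈ range k, (if h : m < n then d ⟨m, h⟩ else 0)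
          = ∑ t : Fin n, (if (t : ℕ) < S.card then dsort x t * dsort y t else 0) := by
        rw [← sum_fin_prefix d hk, hcard, Finset.sum_filter]
      rw [lhs_eq, rhs_eq]
      exact wm_subset x y hnR S
    -- the finite set of extreme points
    set Kb : Set (Fin n → ℝ) :=
      (fun p : (Fin n → Bool) × Equiv.Perm (Fin n) =>
        fun i => (if p.1 i then (1:ℝ) else -1) * d (p.2 i)) '' Set.univ with hKb
    have hfin : Kb.Finite := Set.Finite.image _ Set.finite_univ
    have hclosed : IsClosed (convexHull ℝ Kb) := (hfin.isCompact_convexHull (𝕜 := ℝ)).isClosed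
    have hconv : Convex ℝ (convexHull ℝ Kb) := convex_convexHull ℝ _
    have hwK : w ∈ convexHull ℝ Kb := by
      by_contra hmem
      obtain ⟨f, u, hfa, hfw⟩ := geometric_hahn_banach_closed_point hconv hclosed hmem
      set z : Fin n → ℝ := fun i => f (fun j => if i = j then (1:ℝ) else 0) with hz
      have hfval : ∀ v : Fin n → ℝ, f v = ∑ i, v i * z i := by
        intro v
        conv_lhs => rw [pi_eq_sum_univ v]
        rw [map_sum]
        refine Finset.sum_congr rfl fun i _ => ?_
        rw [map_smul]
        rfl
      have hkey : ∑ i, z i * w i ≤ ∑ i, |z i| * d ((sortPerm z).symm i) :=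
        key_chain w d z hWM
      set p1 : Fin n → Bool := fun i => if z i < 0 then false else true with hp1
      set u₀ : Fin n → ℝ := fun i => (if p1 i then (1:ℝ) else -1) * d ((sortPerm z).symm i)
        with hu₀def
      have hu₀ : u₀ ∈ Kb := ⟨(p1, (sortPerm z).symm), Set.mem_univ _, rfl⟩
      have hfu₀ : f u₀ = ∑ i, |z i| * d ((sortPerm z).symm i) := by
        rw [hfval]
        refine Finset.sum_congr rfl fun i _ => ?_
        rw [hu₀def]
        dsimp only
        by_cases hzi : z i < 0
        · have hp : p1 i = false := by rw [hp1]; simp [hzi]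
          rw [hp, abs_of_neg hzi]
          simp only [Bool.false_eq_true, if_false]
          ring
        · have hp : p1 i = true := by rw [hp1]; simp [hzi]
          rw [hp, abs_of_nonneg (not_lt.1 hzi)]
          simp only [if_true]
          ring
      have hlt : f u₀ < u := hfa u₀ (subset_convexHull ℝ _ hu₀)
      have hfw2 : f w = ∑ i, z i * w i := by
        rw [hfval]
        exact Finset.sum_congr rfl fun i _ => mul_comm _ _
      rw [hfu₀] at hlt
      rw [hfw2] at hfw
      linarith
    -- conclude via convexity of the sublevel set of N
    have hsubset : convexHull ℝ Kb ⊆ {v | N v ≤ N d} := by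
      apply convexHull_min
      · rintro v ⟨p, -, rfl⟩
        have h1 : N (fun i => (if p.1 i then (1:ℝ) else -1) * (d ∘ p.2) i) = N (d ∘ p.2) :=
          hN_sign _ _ (fun i => by by_cases h : p.1 i <;> simp [h])
        have h2 : N (d ∘ p.2) = N d := hN_perm p.2 d
        simp only [Set.mem_setOf_eq]
        exact le_of_eq (h1.trans h2)
      · intro v1 h1 v2 h2 s t hs ht hst
        simp only [Set.mem_setOf_eq] at h1 h2 ⊢
        calc N (s • v1 + t • v2) ≤ N (s • v1) + N (t • v2) := hN_add _ _
        _ = s * N v1 + t * N v2 := by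
            rw [hN_smul, hN_smul, abs_of_nonneg hs, abs_of_nonneg ht]
        _ ≤ s * N d + t * N d :=
            add_le_add (mul_le_mul_of_nonneg_left h1 hs) (mul_le_mul_of_nonneg_left h2 ht)
        _ = N d := by rw [← add_mul, hst, one_mul]
    exact hsubset hwK
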